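/- Define five vectors in ℂ^2: φ_1 = (1, 0), φ_2 = (1/√2)(1, −1), φ_3 = (1/√2)(1, 1), φ_4 = (1/√2)(1, i), φ_5 = (1/√2)(1, −i). Then each φ_j is a unit vector, the angle set A_Φ = { |⟨φ_j, φ_l⟩| : j ≠ l } equals {1/√2, 0} (so Φ is biangular with coherence 1/√2), and Φ is not a tight frame, i.e., ∑_{j=1}^5 φ_j φ_j* ≠ (5/2)·I_2. -/

import Mathlib

open Complex

/-- The five vectors `(1,0)`, `(1/√2)(1,-1)`, `(1/√2)(1,1)`, `(1/√2)(1,i)`,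
`(1/√2)(1,-i)` in `ℂ²`. -/
noncomputable def Φbi : Fin 5 → EuclideanSpace ℂ (Fin 2) :=
  ![(WithLp.equiv 2 (Fin 2 → ℂ)).symm ![1, 0],
    (WithLp.equiv 2 (Fin 2 → ℂ)).symm ![(Real.sqrt 2 : ℂ)⁻¹, -(Real.sqrt 2 : ℂ)⁻¹],
    (WithLp.equiv 2 (Fin 2 → ℂ)).symm ![(Real.sqrt 2 : ℂ)⁻¹, (Real.sqrt 2 : ℂ)⁻¹],
    (WithLp.equiv 2 (Fin 2 → ℂ)).symm ![(Real.sqrt 2 : ℂ)⁻¹, (Real.sqrt 2 : ℂ)⁻¹ * Complex.I],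
    (WithLp.equiv 2 (Fin 2 → ℂ)).symm ![(Real.sqrt 2 : ℂ)⁻¹, -((Real.sqrt 2 : ℂ)⁻¹ * Complex.I)]]

lemma Φbi_inner_eval (x y : Fin 2 → ℂ) :
    (inner ℂ (WithLp.toLp 2 x) (WithLp.toLp 2 y) : ℂ)
      = (starRingEnd ℂ) (x 0) * y 0 + (starRingEnd ℂ) (x 1) * y 1 := by
  simp [PiLp.inner_apply, Fin.sum_univ_two, mul_comm]

lemma Φbi_norm_eval (x : Fin 2 → ℂ) :
    ‖(WithLp.toLp 2 x : EuclideanSpace ℂ (Fin 2))‖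
      = Real.sqrt (‖x 0‖^2 + ‖x 1‖^2) := by
  simp [EuclideanSpace.norm_eq, Fin.sum_univ_two]

lemma Φbi_norm_of_normSq_half (z : ℂ) (h : Complex.normSq z = 2⁻¹) :
    ‖z‖ = 1 / Real.sqrt 2 := by
  rw [Complex.norm_def, h, one_div, Real.sqrt_inv]

lemma Φbi_hs : (Real.sqrt 2)⁻¹ * (Real.sqrt 2)⁻¹ = 2⁻¹ := by
  rw [← mul_inv, Real.mul_self_sqrt (by norm_num)]

lemma Φbi_hsC : ((Real.sqrt 2 : ℂ))⁻¹ * ((Real.sqrt 2 : ℂ))⁻¹ = 2⁻¹ := by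
  rw [← mul_inv]
  norm_cast
  rw [Real.mul_self_sqrt (by norm_num)]
  norm_num

lemma Φbi_inner_cases (j l : Fin 5) (hne : j ≠ l) :
    ‖(inner ℂ (Φbi j) (Φbi l) : ℂ)‖ = 1 / Real.sqrt 2 ∨
    ‖(inner ℂ (Φbi j) (Φbi l) : ℂ)‖ = 0 := by
  fin_cases j <;> fin_cases l <;> simp only [ne_eq, not_true] at hne ⊢ <;>
    first
    | exact absurd rfl hne
    | (left
       apply Φbi_norm_of_normSq_half
       simp [Φbi, Φbi_inner_eval, Complex.normSq_apply]
       all_goals norm_num [Φbi_hs]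
       all_goals nlinarith [Real.mul_self_sqrt (show (0:ℝ) ≤ 2 by norm_num)])
    | (right
       rw [norm_eq_zero]
       simp [Φbi, Φbi_inner_eval]
       all_goals (ring_nf; simp [Complex.I_sq]; try ring))

lemma Φbi_inner_01 : ‖(inner ℂ (Φbi 0) (Φbi 1) : ℂ)‖ = 1 / Real.sqrt 2 := by
  apply Φbi_norm_of_normSq_half
  simp [Φbi, Φbi_inner_eval, Complex.normSq_apply]
  all_goals norm_num [Φbi_hs]
  all_goals nlinarith [Real.mul_self_sqrt (show (0:ℝ) ≤ 2 by norm_num)]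

lemma Φbi_inner_12 : ‖(inner ℂ (Φbi 1) (Φbi 2) : ℂ)‖ = 0 := by
  rw [norm_eq_zero]
  simp [Φbi, Φbi_inner_eval]
  all_goals (ring_nf; simp [Complex.I_sq]; try ring)

/-- The five vectors of `Φbi` are unit vectors in `ℂ²` with angle set
exactly `{1/√2, 0}` (so `Φbi` is biangular with coherence `1/√2`), and `Φbi` is not a
tight frame: `∑ j, φ_j φ_j* ≠ (5/2) • I`. -/
theorem biangular_nontight_grassmannian_five_two :
    (∀ j, ‖Φbi j‖ = 1) ∧
    {r : ℝ | ∃ j l, j ≠ l ∧ ‖(inner ℂ (Φbi j) (Φbi l) : ℂ)‖ = r} = {1 / Real.sqrt 2, 0} ∧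
    ¬ (∀ x : EuclideanSpace ℂ (Fin 2),
      ∑ j, (inner ℂ (Φbi j) x : ℂ) • Φbi j = (5 / 2 : ℂ) • x) := by
  refine ⟨?_, ?_, ?_⟩
  · intro j
    fin_cases j <;> simp [Φbi, Φbi_norm_eval] <;> norm_num
  · ext r
    constructor
    · rintro ⟨j, l, hne, rfl⟩
      rcases Φbi_inner_cases j l hne with h | h <;> rw [h] <;> simp
    · rintro (rfl | rfl)
      · exact ⟨0, 1, by decide, Φbi_inner_01⟩
      · exact ⟨1, 2, by decide, Φbi_inner_12⟩
  · intro h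
    have h0 := congrArg (fun v : EuclideanSpace ℂ (Fin 2) => v 0) (h (Φbi 0))
    simp [Φbi, Φbi_inner_eval, Φbi_norm_eval, Fin.sum_univ_five, Φbi_hsC] at h0
    norm_num at h0
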